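/- If a weighted undirected graph G on n vertices with nonnegative loop weights has at least two edges (counting loops) with nonzero weight that are not the same edge, then ρ(G) = L(G)/tr(L(G)) is a mixed state, i.e., ρ(G)² ≠ ρ(G). -/

import Mathlib

/-- If a weighted undirected graph on n vertices with nonnegative loop
weights has at least two distinct edges (counting loops) of nonzero weight, then its
normalized signless Laplacian ρ(G) satisfies ρ(G)² ≠ ρ(G), i.e., it is a mixed state. -/
theorem stmt3 (n : ℕ) (A D L ρ : Matrix (Fin n) (Fin n) ℝ)
    (hA : A.IsSymm) (hloops : ∀ i, 0 ≤ A i i)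
    (i₁ j₁ i₂ j₂ : Fin n)
    (h₁ : A i₁ j₁ ≠ 0) (h₂ : A i₂ j₂ ≠ 0)
    (hdistinct : ¬ ((i₁ = i₂ ∧ j₁ = j₂) ∨ (i₁ = j₂ ∧ j₁ = i₂)))
    (hD : D = Matrix.diagonal (fun i => ∑ j, |A i j|))
    (hL : L = D + A)
    (hρ : ρ = (L.trace)⁻¹ • L) :
    ρ * ρ ≠ ρ := by
  intro hpure
  set t := L.trace with ht
  set d : Fin n → ℝ := fun i => (∑ j, |A i j|) + A i i with hd
  have hAsymm : ∀ i j, A i j = A j i := fun i j => hA.apply j i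
  have hLd : ∀ i, L i i = d i := by
    intro i; rw [hL, hD]; simp [Matrix.add_apply, Matrix.diagonal_apply_eq, hd]
  have hLoff : ∀ i j, i ≠ j → L i j = A i j := by
    intro i j hij; rw [hL, hD]
    simp [Matrix.add_apply, Matrix.diagonal_apply_ne _ hij]
  have hLsymm : ∀ i j, L i j = L j i := by
    intro i j
    by_cases hij : i = j
    · subst hij; rfl
    · rw [hLoff i j hij, hLoff j i (Ne.symm hij), hAsymm]
  have habs_le : ∀ i j, |A i j| ≤ d i := by
    intro i j
    have h1 : |A i j| ≤ ∑ k, |A i k| :=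
      Finset.single_le_sum (fun k _ => abs_nonneg (A i k)) (Finset.mem_univ j)
    have := hloops i
    simp only [hd]; linarith
  have hdnn : ∀ i, 0 ≤ d i := by
    intro i
    have : (0:ℝ) ≤ ∑ j, |A i j| := Finset.sum_nonneg fun j _ => abs_nonneg _
    have := hloops i
    simp only [hd]; linarith
  have hdpos : ∀ i j, A i j ≠ 0 → 0 < d i := by
    intro i j hij
    exact lt_of_lt_of_le (abs_pos.mpr hij) (habs_le i j)
  have hLabs : ∀ i j, |L i j| ≤ d i := by
    intro i j
    by_cases hij : i = j
    · subst hij; rw [hLd, abs_of_nonneg (hdnn i)]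
    · rw [hLoff i j hij]; exact habs_le i j
  -- trace is the sum of d
  have htsum : t = ∑ i, d i := by
    simp only [ht, Matrix.trace, Matrix.diag]
    exact Finset.sum_congr rfl fun i _ => hLd i
  have htpos : 0 < t := by
    rw [htsum]
    have h1 : 0 < d i₁ := hdpos i₁ j₁ h₁
    have h2 : d i₁ ≤ ∑ i, d i :=
      Finset.single_le_sum (fun i _ => hdnn i) (Finset.mem_univ i₁)
    linarith
  have htne : t ≠ 0 := ne_of_gt htpos
  -- trace of L*L equals t^2
  have htrLL : ∑ i, ∑ k, L i k * L k i = t * t := by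
    have h1 : (ρ * ρ).trace = ρ.trace := by rw [hpure]
    have h2 : ρ.trace = 1 := by
      rw [hρ, Matrix.trace_smul, smul_eq_mul, ← ht, inv_mul_cancel₀ htne]
    have h3 : ρ * ρ = (t⁻¹ * t⁻¹) • (L * L) := by
      rw [hρ, smul_mul_assoc, mul_smul_comm, smul_smul]
    have h4 : ((t⁻¹ * t⁻¹) • (L * L)).trace = 1 := by rw [← h3, h1, h2]
    rw [Matrix.trace_smul, smul_eq_mul] at h4
    have h5 : (L * L).trace = t * t := by
      field_simp at h4; linarith [h4]
    rw [← h5]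
    simp [Matrix.trace, Matrix.mul_apply]
  -- key pointwise equality
  have key : ∀ i j, L i j * L i j = d i * d j := by
    have hle : ∀ i j, L i j * L i j ≤ d i * d j := by
      intro i j
      have h1 : L i j * L i j = |L i j| * |L i j| := (abs_mul_abs_self _).symm
      rw [h1]
      have h2 : |L i j| ≤ d j := by rw [hLsymm]; exact hLabs j i
      exact mul_le_mul (hLabs i j) h2 (abs_nonneg _) (hdnn i)
    have hsum : ∑ i, ∑ j, L i j * L i j = ∑ i, ∑ j, d i * d j := by
      have e1 : ∑ i, ∑ j, L i j * L i j = ∑ i, ∑ k, L i k * L k i :=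
        Finset.sum_congr rfl fun i _ => Finset.sum_congr rfl fun k _ => by rw [hLsymm i k]
      rw [e1, htrLL, htsum, Finset.sum_mul_sum]
    have hle2 : ∀ i ∈ Finset.univ, (∑ j, L i j * L i j) ≤ ∑ j, d i * d j :=
      fun i _ => Finset.sum_le_sum fun j _ => hle i j
    have heq1 := (Finset.sum_eq_sum_iff_of_le hle2).mp hsum
    intro i j
    have heq2 := (Finset.sum_eq_sum_iff_of_le
      (fun j _ => hle i j)).mp (heq1 i (Finset.mem_univ i))
    exact heq2 j (Finset.mem_univ j)
  -- |L i j| = sqrt (d i) * sqrt (d j)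
  have habs_eq : ∀ i j, |L i j| = Real.sqrt (d i) * Real.sqrt (d j) := by
    intro i j
    have : |L i j| = Real.sqrt (L i j * L i j) := by
      rw [← Real.sqrt_mul_self (abs_nonneg (L i j)), abs_mul_abs_self]
    rw [this, key i j, Real.sqrt_mul (hdnn i)]
  -- the structural lemma
  have K : ∀ p q : Fin n, p ≠ q → 0 < d p → 0 < d q →
      A p p = 0 ∧ ∀ j, j ≠ p → j ≠ q → d j = 0 := by
    intro p q hpq hdp hdq
    set sp := Real.sqrt (d p) with hsp
    set sq := Real.sqrt (d q) with hsq
    have hsppos : 0 < sp := Real.sqrt_pos.mpr hdp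
    have hsqpos : 0 < sq := Real.sqrt_pos.mpr hdq
    -- row equation for a vertex r with the other vertex r'
    have row : ∀ r r' : Fin n, r ≠ r' →
        d r = Real.sqrt (d r) * Real.sqrt (d r') +
          Real.sqrt (d r) * (∑ j ∈ (Finset.univ.erase r).erase r', Real.sqrt (d j)) +
          2 * A r r := by
      intro r r' hrr'
      have e0 : d r = (∑ j ∈ Finset.univ.erase r, |A r j|) + 2 * A r r := by
        have : ∑ j, |A r j| = |A r r| + ∑ j ∈ Finset.univ.erase r, |A r j| :=
          (Finset.add_sum_erase _ _ (Finset.mem_univ r)).symm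
        simp only [hd]
        rw [this, abs_of_nonneg (hloops r)]; ring
      have e1 : ∀ j ∈ Finset.univ.erase r, |A r j| = Real.sqrt (d r) * Real.sqrt (d j) := by
        intro j hj
        have hjr : j ≠ r := Finset.ne_of_mem_erase hj
        rw [← hLoff r j (Ne.symm hjr), habs_eq]
      have e2 : ∑ j ∈ Finset.univ.erase r, |A r j|
          = Real.sqrt (d r) * ∑ j ∈ Finset.univ.erase r, Real.sqrt (d j) := by
        rw [Finset.sum_congr rfl e1, Finset.mul_sum]
      have hr'mem : r' ∈ Finset.univ.erase r := Finset.mem_erase.mpr ⟨Ne.symm hrr', Finset.mem_univ r'⟩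
      have e3 : ∑ j ∈ Finset.univ.erase r, Real.sqrt (d j)
          = Real.sqrt (d r') + ∑ j ∈ (Finset.univ.erase r).erase r', Real.sqrt (d j) :=
        (Finset.add_sum_erase _ _ hr'mem).symm
      rw [e2, e3, mul_add] at e0
      linarith [e0]
    have Rnn : ∀ (s : Finset (Fin n)), 0 ≤ ∑ j ∈ s, Real.sqrt (d j) :=
      fun s => Finset.sum_nonneg fun j _ => Real.sqrt_nonneg _
    have rowp := row p q hpq
    have rowq := row q p (Ne.symm hpq)
    have herase : (Finset.univ.erase q).erase p = (Finset.univ.erase p).erase q := by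
      rw [Finset.erase_right_comm]
    rw [herase] at rowq
    set R := ∑ j ∈ (Finset.univ.erase p).erase q, Real.sqrt (d j) with hR
    have hRnn : 0 ≤ R := Rnn _
    have hdpsq : d p = sp * sp := (Real.mul_self_sqrt (hdnn p)).symm
    have hdqsq : d q = sq * sq := (Real.mul_self_sqrt (hdnn q)).symm
    have hApp := hloops p
    have hAqq := hloops q
    -- sp = sq
    have h1 : sp * sp = sp * sq + sp * R + 2 * A p p := by rw [← hdpsq]; exact rowp
    have h2 : sq * sq = sq * sp + sq * R + 2 * A q q := by rw [← hdqsq]; exact rowq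
    have hspRnn : 0 ≤ sp * R := mul_nonneg hsppos.le hRnn
    have hsqRnn : 0 ≤ sq * R := mul_nonneg hsqpos.le hRnn
    have e1' : sp * (sp - sq) = sp * R + 2 * A p p := by linear_combination h1
    have e2' : sq * (sq - sp) = sq * R + 2 * A q q := by linear_combination h2
    have hn1 : 0 ≤ sp * (sp - sq) := by rw [e1']; linarith
    have hn2 : 0 ≤ sq * (sq - sp) := by rw [e2']; linarith
    have hsple : sq ≤ sp := by
      have := (mul_nonneg_iff_of_pos_left hsppos).mp hn1
      linarith
    have hsqle : sp ≤ sq := by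
      have := (mul_nonneg_iff_of_pos_left hsqpos).mp hn2
      linarith
    have hspeq : sp = sq := le_antisymm hsqle hsple
    have h3 : sp * R + 2 * A p p = 0 := by linear_combination -h1 + sp * hspeq
    have hApp0 : A p p = 0 := by linarith
    have hspR0 : sp * R = 0 := by linarith
    have hR0 : R = 0 := by
      rcases mul_eq_zero.mp hspR0 with h | h
      · exact absurd h (ne_of_gt hsppos)
      · exact h
    refine ⟨hApp0, fun j hjp hjq => ?_⟩
    have hjmem : j ∈ (Finset.univ.erase p).erase q :=
      Finset.mem_erase.mpr ⟨hjq, Finset.mem_erase.mpr ⟨hjp, Finset.mem_univ j⟩⟩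
    have hsqrt0 : Real.sqrt (d j) = 0 := by
      have := (Finset.sum_eq_zero_iff_of_nonneg
        (fun j _ => Real.sqrt_nonneg (d j))).mp hR0 j hjmem
      exact this
    have := Real.sqrt_eq_zero (hdnn j) |>.mp hsqrt0
    exact this
  -- positivity of the four degrees
  have hd1 : 0 < d i₁ := hdpos i₁ j₁ h₁
  have hd2 : 0 < d j₁ := hdpos j₁ i₁ (by rw [hAsymm]; exact h₁)
  have hd3 : 0 < d i₂ := hdpos i₂ j₂ h₂
  have hd4 : 0 < d j₂ := hdpos j₂ i₂ (by rw [hAsymm]; exact h₂)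
  -- final case analysis
  by_cases h11 : i₁ = j₁
  · subst h11
    have hne : i₂ ≠ i₁ ∨ j₂ ≠ i₁ := by
      by_contra hcon
      push_neg at hcon
      exact hdistinct (Or.inl ⟨hcon.1.symm, hcon.2.symm⟩)
    rcases hne with hne | hne
    · exact h₁ (K i₁ i₂ (Ne.symm hne) hd1 hd3).1
    · exact h₁ (K i₁ j₂ (Ne.symm hne) hd1 hd4).1
  · by_cases h22 : i₂ = j₂
    · subst h22
      have hne : i₁ ≠ i₂ ∨ j₁ ≠ i₂ := by
        by_contra hcon
        push_neg at hcon
        exact hdistinct (Or.inl ⟨hcon.1, hcon.2⟩)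
      rcases hne with hne | hne
      · exact h₂ (K i₂ i₁ (Ne.symm hne) hd3 hd1).1
      · exact h₂ (K i₂ j₁ (Ne.symm hne) hd3 hd2).1
    · obtain ⟨-, hzero⟩ := K i₁ j₁ h11 hd1 hd2
      have hi2 : i₂ = i₁ ∨ i₂ = j₁ := by
        by_contra hcon
        push_neg at hcon
        exact absurd (hzero i₂ hcon.1 hcon.2) (ne_of_gt hd3)
      have hj2 : j₂ = i₁ ∨ j₂ = j₁ := by
        by_contra hcon
        push_neg at hcon
        exact absurd (hzero j₂ hcon.1 hcon.2) (ne_of_gt hd4)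
      rcases hi2 with hi2 | hi2 <;> rcases hj2 with hj2 | hj2
      · exact h22 (hi2.trans hj2.symm)
      · exact hdistinct (Or.inl ⟨hi2.symm, hj2.symm⟩)
      · exact hdistinct (Or.inr ⟨hj2.symm, hi2.symm⟩)
      · exact h22 (hi2.trans hj2.symm)
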